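/- Let k be a commutative ring and let f : X → Y be a morphism of simplicial unbounded chain complexes over k. For n ≥ 1, let DXₙ := Σ_{0 ≤ i ≤ n−1} im(sᵢ : Xₙ₋₁ → Xₙ) ⊆ Xₙ denote the degenerate subobject, and similarly for Y; since f commutes with degeneracies, fₙ restricts to a map Dfₙ : DXₙ → DYₙ. If f is an objectwise weak equivalence (each fₙ is a quasi-isomorphism), then Dfₙ : DXₙ → DYₙ is a quasi-isomorphism for each n ≥ 1. -/

import Mathlib

open CategoryTheory CategoryTheory.Limits Opposite

variable (k : Type) [CommRing k]

/-- The degenerate subobject `DXₙ₊₁ = Σ_{0 ≤ i ≤ n} im(sᵢ : Xₙ → Xₙ₊₁)` of a simplicial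
unbounded chain complex over `k`. -/
noncomputable def DSub (X : SimplicialObject (ChainComplex (ModuleCat.{0} k) ℤ)) (n : ℕ) :
    Subobject (X.obj (op (SimplexCategory.mk (n + 1)))) :=
  Finset.univ.sup fun i : Fin (n + 1) => imageSubobject (X.σ i)

namespace DegenerateAux

open AlgebraicTopology AlgebraicTopology.DoldKan Simplicial

variable (X : SimplicialObject (ChainComplex (ModuleCat.{0} k) ℤ)) (n : ℕ)

lemma sigma_comp_QInfty (i : Fin (n + 1)) :
    X.σ i ≫ QInfty.f (n + 1) = X.σ i := by
  have h : (QInfty.f (n + 1) : X _⦋n + 1⦌ ⟶ _) = 𝟙 _ - PInfty.f (n + 1) := by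
    simp [QInfty]
  rw [h]
  simp

lemma le_DSub (i : Fin (n + 1)) : imageSubobject (X.σ i) ≤ DSub k X n := by
  unfold DSub
  exact Finset.le_sup (f := fun i : Fin (n + 1) => imageSubobject (X.σ i)) (Finset.mem_univ i)

lemma factors_sigma (i : Fin (n + 1)) : (DSub k X n).Factors (X.σ i) := by
  have h : (imageSubobject (X.σ i)).Factors (X.σ i) := by
    simpa using imageSubobject_factors_comp_self (f := X.σ i) (𝟙 _)
  exact Subobject.factors_of_le (X.σ i) (le_DSub k X n i) h

lemma arrow_comp_PInfty : (DSub k X n).arrow ≫ PInfty.f (n + 1) = 0 := by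
  have hle : DSub k X n ≤ kernelSubobject (PInfty.f (n + 1) : X _⦋n + 1⦌ ⟶ _) := by
    unfold DSub
    exact Finset.sup_le fun i _ =>
      imageSubobject_le _
        (factorThruImageSubobject _ ≫ imageToKernel _ _ (σ_comp_PInfty X i)) (by simp)
  rw [← Subobject.ofLE_arrow hle, Category.assoc, kernelSubobject_arrow_comp, comp_zero]

lemma arrow_comp_QInfty :
    (DSub k X n).arrow ≫ QInfty.f (n + 1) = (DSub k X n).arrow := by
  have h : (QInfty.f (n + 1) : X _⦋n + 1⦌ ⟶ _) = 𝟙 _ - PInfty.f (n + 1) := by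
    simp [QInfty]
  rw [h]
  simp [Preadditive.comp_sub, arrow_comp_PInfty]

/-- A retraction `X _[n+1] ⟶ DXₙ₊₁` whose composition with the inclusion is `QInfty`. -/
noncomputable def retr : (X _⦋n + 1⦌ : ChainComplex (ModuleCat.{0} k) ℤ) ⟶
    ((DSub k X n : Subobject _) : ChainComplex (ModuleCat.{0} k) ℤ) :=
  ∑ i : Fin (n + 1),
    (P (i : ℕ)).f (n + 1) ≫ X.δ i.rev.succ ≫
      (DSub k X n).factorThru (X.σ i.rev) (factors_sigma k X n i.rev)

lemma retr_comp_arrow : retr k X n ≫ (DSub k X n).arrow = QInfty.f (n + 1) := by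
  rw [retr, Preadditive.sum_comp]
  have hd := decomposition_Q (X := X) n (n + 1)
  rw [QInfty_f, hd]
  rw [Finset.filter_true_of_mem (fun i _ => i.isLt)]
  apply Finset.sum_congr rfl
  intro i _
  simp [Category.assoc, Subobject.factorThru_arrow]

lemma arrow_comp_retr : (DSub k X n).arrow ≫ retr k X n = 𝟙 _ := by
  rw [← cancel_mono (DSub k X n).arrow, Category.assoc, retr_comp_arrow,
    arrow_comp_QInfty, Category.id_comp]

end DegenerateAux

/-- If `f : X ⟶ Y` is an objectwise weak equivalence of simplicial unbounded
chain complexes over `k`, then for each `n ≥ 1` the restriction `Dfₙ : DXₙ ⟶ DYₙ` of `fₙ` to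
the degenerate subobjects (i.e. the map commuting with the subobject inclusions) is a
quasi-isomorphism. -/
theorem quasiIso_degenerate_subobject_map
    {X Y : SimplicialObject (ChainComplex (ModuleCat.{0} k) ℤ)} (f : X ⟶ Y)
    (hf : ∀ n : SimplexCategoryᵒᵖ, QuasiIso (f.app n)) (n : ℕ)
    (Df : ((DSub k X n : Subobject _) : ChainComplex (ModuleCat.{0} k) ℤ) ⟶
      ((DSub k Y n : Subobject _) : ChainComplex (ModuleCat.{0} k) ℤ))
    (hDf : Df ≫ (DSub k Y n).arrow =
      (DSub k X n).arrow ≫ f.app (op (SimplexCategory.mk (n + 1)))) :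
    QuasiIso Df := by
  open AlgebraicTopology AlgebraicTopology.DoldKan DegenerateAux Simplicial in
  constructor
  intro i
  rw [quasiIsoAt_iff_isIso_homologyMap]
  set fn := f.app (op (SimplexCategory.mk (n + 1))) with hfn
  have : QuasiIso fn := hf _
  have hIso : IsIso (HomologicalComplex.homologyMap fn i) := by
    rw [← quasiIsoAt_iff_isIso_homologyMap]
    infer_instance
  -- key commutation: retr ≫ Df = fn ≫ retr
  have hcomm : retr k X n ≫ Df = fn ≫ retr k Y n := by
    rw [← cancel_mono (DSub k Y n).arrow, Category.assoc, Category.assoc, hDf,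
      ← Category.assoc, retr_comp_arrow, retr_comp_arrow]
    exact (QInfty_f_naturality (n + 1) f).symm
  refine ⟨HomologicalComplex.homologyMap (DSub k Y n).arrow i ≫
    inv (HomologicalComplex.homologyMap fn i) ≫
    HomologicalComplex.homologyMap (retr k X n) i, ?_, ?_⟩
  · rw [← Category.assoc, ← Category.assoc, ← HomologicalComplex.homologyMap_comp, hDf,
      HomologicalComplex.homologyMap_comp, Category.assoc, Category.assoc,
      IsIso.hom_inv_id_assoc, ← HomologicalComplex.homologyMap_comp, arrow_comp_retr,
      HomologicalComplex.homologyMap_id]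
  · rw [Category.assoc, Category.assoc, ← HomologicalComplex.homologyMap_comp, hcomm,
      HomologicalComplex.homologyMap_comp, IsIso.inv_hom_id_assoc,
      ← HomologicalComplex.homologyMap_comp, arrow_comp_retr,
      HomologicalComplex.homologyMap_id]
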